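/- For every nonnegative integer s there exists a positive constant C such that for all integers l with l ≥ max(s,1) and all θ in the closed interval [0,π], the bound ((1+cosθ)/2)^s · |P_{l−s}^{(0,2s)}(cosθ)| ≤ C · l^{2s} holds; i.e., the diagonal Wigner d-matrix element d_{s,s}^l(θ) = ((1+cosθ)^s/2^s) · P_{l−s}^{(0,2s)}(cosθ) is bounded uniformly in θ by C · l^{2s}. -/

import Mathlib

set_option maxHeartbeats 1000000


/-- The Jacobi polynomial `P_n^{(α,β)}` with nonnegative integer parameters,
as a function of a real variable:
`P_n^{(α,β)}(t) = Σ_{j=0}^{n} C(n+α, n−j) · C(n+β, j) · ((t−1)/2)^j · ((t+1)/2)^{n−j}`. -/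
noncomputable def jacobiP (n α β : ℕ) (t : ℝ) : ℝ :=
  ∑ j ∈ Finset.range (n + 1),
    ((n + α).choose (n - j) : ℝ) * ((n + β).choose j : ℝ) *
      ((t - 1) / 2) ^ j * ((t + 1) / 2) ^ (n - j)

open Finset in
lemma jacobi_key (n s : ℕ) (c σ : ℝ) (h1 : c ^ 2 + σ ^ 2 = 1) :
    |(c ^ 2) ^ s * jacobiP n 0 (2 * s) (c ^ 2 - σ ^ 2)| ≤ 2 ^ s := by
  set N : ℕ := 2 * n + 2 * s + 1 with hNdef
  have hNpos : 0 < N := by omega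
  set ζ : ℂ := Complex.exp (2 * Real.pi * Complex.I / N) with hζ
  have hprim : IsPrimitiveRoot ζ N := Complex.isPrimitiveRoot_exp N (by omega)
  have hζne : ζ ≠ 0 := by
    intro h
    have h2 := hprim.pow_eq_one
    rw [h] at h2
    simp [hNpos.ne'] at h2
  have hζabs : ‖ζ‖ = 1 := by
    have : ζ = Complex.exp ((2 * Real.pi / N : ℝ) * Complex.I) := by
      rw [hζ]; congr 1; push_cast; ring
    rw [this, Complex.norm_exp_ofReal_mul_I]
  -- coefficient sequences
  set A : ℕ → ℂ := fun j => (c : ℂ) ^ j * (-(σ : ℂ)) ^ (n - j) * (n.choose j : ℂ) with hA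
  set B : ℕ → ℂ := fun m => (σ : ℂ) ^ m * (c : ℂ) ^ (n + 2 * s - m) * ((n + 2 * s).choose m : ℂ)
    with hB
  set f : ℂ → ℂ := fun z => ((c : ℂ) * z - σ) ^ n * ((σ : ℂ) * z + c) ^ (n + 2 * s) with hf
  have hfz : ∀ z : ℂ, f z
      = ∑ j ∈ range (n + 1), ∑ m ∈ range (n + 2 * s + 1), A j * B m * z ^ (j + m) := by
    intro z
    have e1 : ((c : ℂ) * z - σ) ^ n = ∑ j ∈ range (n + 1), A j * z ^ j := by
      rw [sub_eq_add_neg, add_pow]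
      refine sum_congr rfl fun j hj => ?_
      rw [hA]; ring
    have e2 : ((σ : ℂ) * z + c) ^ (n + 2 * s) = ∑ m ∈ range (n + 2 * s + 1), B m * z ^ m := by
      rw [add_pow]
      refine sum_congr rfl fun m hm => ?_
      rw [hB]; ring
    simp only [hf]
    rw [e1, e2, sum_mul_sum]
    refine sum_congr rfl fun j _ => sum_congr rfl fun m _ => ?_
    rw [pow_add]; ring
  -- max modulus bound on the unit circle
  have habs : ∀ z : ℂ, ‖z‖ = 1 → ‖f z‖ ≤ 2 ^ s := by
    intro z hz
    have hnz : z.re ^ 2 + z.im ^ 2 = 1 := by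
      have h := Complex.sq_norm z
      rw [hz] at h
      rw [Complex.normSq_apply] at h
      nlinarith [h]
    set u : ℝ := 2 * c * σ * z.re with hu
    have hP2 : ‖(c : ℂ) * z - σ‖ ^ 2 = 1 - u := by
      rw [Complex.sq_norm, Complex.normSq_apply]
      simp only [Complex.sub_re, Complex.sub_im, Complex.mul_re, Complex.mul_im,
        Complex.ofReal_re, Complex.ofReal_im]
      nlinarith [hnz, h1]
    have hQ2 : ‖(σ : ℂ) * z + c‖ ^ 2 = 1 + u := by
      rw [Complex.sq_norm, Complex.normSq_apply]
      simp only [Complex.add_re, Complex.add_im, Complex.mul_re, Complex.mul_im,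
        Complex.ofReal_re, Complex.ofReal_im]
      nlinarith [hnz, h1]
    have hre2 : z.re ^ 2 ≤ 1 := by nlinarith [sq_nonneg z.im]
    have hu1 : 1 - u ≥ 0 := by nlinarith [sq_nonneg (c - σ * z.re), sq_nonneg (σ * z.im)]
    have hu2 : 1 + u ≥ 0 := by nlinarith [sq_nonneg (c + σ * z.re), sq_nonneg (σ * z.im)]
    have hu3 : 1 + u ≤ 2 := by nlinarith [sq_nonneg (c - σ * z.re), sq_nonneg (σ * z.im)]
    set P : ℝ := ‖(c : ℂ) * z - σ‖ with hP
    set Q : ℝ := ‖(σ : ℂ) * z + c‖ with hQ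
    have hP0 : 0 ≤ P := norm_nonneg _
    have hQ0 : 0 ≤ Q := norm_nonneg _
    have hfv : ‖f z‖ = P ^ n * Q ^ (n + 2 * s) := by
      simp only [hf]
      rw [norm_mul, norm_pow, norm_pow]
    have hsq : (P ^ n * Q ^ (n + 2 * s)) ^ 2 ≤ ((2 : ℝ) ^ s) ^ 2 := by
      have e : (P ^ n * Q ^ (n + 2 * s)) ^ 2
          = (P ^ 2 * Q ^ 2) ^ n * ((Q ^ 2) ^ s) ^ 2 := by ring
      rw [e, hP2, hQ2]
      have b1 : ((1 - u) * (1 + u)) ^ n ≤ 1 := by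
        apply pow_le_one₀ (by nlinarith) (by nlinarith [sq_nonneg u])
      have b2 : ((1 + u) ^ s) ^ 2 ≤ ((2 : ℝ) ^ s) ^ 2 := by
        have : (1 + u) ^ s ≤ 2 ^ s := pow_le_pow_left₀ hu2 hu3 s
        have h0 : (0:ℝ) ≤ (1 + u) ^ s := pow_nonneg hu2 s
        nlinarith
      calc ((1 - u) * (1 + u)) ^ n * ((1 + u) ^ s) ^ 2
          ≤ 1 * (((1 + u) ^ s) ^ 2) := by
            apply mul_le_mul_of_nonneg_right b1 (sq_nonneg _)
        _ ≤ ((2 : ℝ) ^ s) ^ 2 := by rw [one_mul]; exact b2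
    rw [hfv]
    nlinarith [mul_nonneg (pow_nonneg hP0 n) (pow_nonneg hQ0 (n + 2 * s)),
      pow_nonneg (by norm_num : (0:ℝ) ≤ 2) s, hsq]
  -- geometric sum of roots of unity
  have hgeom : ∀ k : ℤ, k ≠ 0 → -(N : ℤ) < k → k < N →
      ∑ r ∈ range N, (ζ ^ k) ^ r = 0 := by
    intro k hk0 hk1 hk2
    have hw1 : ζ ^ k ≠ 1 := by
      intro h
      have hdvd := (hprim.zpow_eq_one_iff_dvd k).mp h
      have := Int.eq_zero_of_abs_lt_dvd hdvd (by
        rw [abs_lt]; constructor <;> omega)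
      exact hk0 this
    have hwN : (ζ ^ k) ^ N = 1 := by
      rw [← zpow_natCast (ζ ^ k) N, ← zpow_mul, mul_comm, zpow_mul, zpow_natCast,
        hprim.pow_eq_one, one_zpow]
    rw [geom_sum_eq hw1, hwN, sub_self, zero_div]
  -- the diagonal coefficient
  set D : ℂ := ∑ j ∈ range (n + 1), A j * B (n - j) with hD
  have hmain : ∑ r ∈ range N, f (ζ ^ r) * ζ ^ (-((n : ℤ) * r)) = (N : ℂ) * D := by
    have step1 : ∀ r : ℕ, f (ζ ^ r) * ζ ^ (-((n : ℤ) * r))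
        = ∑ j ∈ range (n + 1), ∑ m ∈ range (n + 2 * s + 1),
            A j * B m * (ζ ^ ((j : ℤ) + m - n)) ^ r := by
      intro r
      rw [hfz (ζ ^ r), sum_mul]
      refine sum_congr rfl fun j _ => ?_
      rw [sum_mul]
      refine sum_congr rfl fun m _ => ?_
      rw [mul_assoc]
      congr 1
      rw [← pow_mul, ← zpow_natCast ζ (r * (j + m)), ← zpow_add₀ hζne]
      rw [show ((r * (j + m) : ℕ) : ℤ) + -((n : ℤ) * r) = ((j : ℤ) + m - n) * r by
        push_cast; ring]
      rw [zpow_mul, zpow_natCast]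
    calc ∑ r ∈ range N, f (ζ ^ r) * ζ ^ (-((n : ℤ) * r))
        = ∑ r ∈ range N, ∑ j ∈ range (n + 1), ∑ m ∈ range (n + 2 * s + 1),
            A j * B m * (ζ ^ ((j : ℤ) + m - n)) ^ r :=
          sum_congr rfl fun r _ => step1 r
      _ = ∑ j ∈ range (n + 1), ∑ m ∈ range (n + 2 * s + 1),
            A j * B m * ∑ r ∈ range N, (ζ ^ ((j : ℤ) + m - n)) ^ r := by
          rw [sum_comm]
          refine sum_congr rfl fun j _ => ?_
          rw [sum_comm]
          refine sum_congr rfl fun m _ => ?_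
          rw [mul_sum]
      _ = ∑ j ∈ range (n + 1), ∑ m ∈ range (n + 2 * s + 1),
            (if m = n - j then A j * B m * N else 0) := by
          refine sum_congr rfl fun j hj => sum_congr rfl fun m hm => ?_
          simp only [mem_range] at hj hm
          by_cases hjm : m = n - j
          · rw [if_pos hjm]
            have : (j : ℤ) + m - n = 0 := by omega
            rw [this, zpow_zero]
            simp
          · rw [if_neg hjm]
            rw [hgeom ((j : ℤ) + m - n) (by omega) (by omega) (by omega)]
            rw [mul_zero]
      _ = ∑ j ∈ range (n + 1), A j * B (n - j) * N := by
          refine sum_congr rfl fun j hj => ?_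
          simp only [mem_range] at hj
          rw [Finset.sum_ite_eq' (range (n + 2 * s + 1)) (n - j)
            (fun m => A j * B m * N)]
          rw [if_pos (by simp only [mem_range]; omega)]
      _ = (N : ℂ) * D := by rw [hD, ← sum_mul]; ring
  -- bound on |D|
  have hDbound : ‖D‖ ≤ 2 ^ s := by
    have h1' : ‖(N : ℂ) * D‖ ≤ N * 2 ^ s := by
      rw [← hmain]
      calc ‖∑ r ∈ range N, f (ζ ^ r) * ζ ^ (-((n : ℤ) * r))‖
          ≤ ∑ r ∈ range N, ‖f (ζ ^ r) * ζ ^ (-((n : ℤ) * r))‖ :=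
            norm_sum_le _ _
        _ ≤ ∑ r ∈ range N, (2 : ℝ) ^ s := by
            refine sum_le_sum fun r _ => ?_
            rw [norm_mul, norm_zpow, hζabs, one_zpow, mul_one]
            exact habs (ζ ^ r) (by rw [norm_pow, hζabs, one_pow])
        _ = N * 2 ^ s := by rw [sum_const, card_range, nsmul_eq_mul]
    rw [norm_mul, Complex.norm_natCast] at h1'
    have hN' : (0 : ℝ) < N := by exact_mod_cast hNpos
    exact le_of_mul_le_mul_left h1' hN'
  -- identify the real quantity with D
  have hTD : (((c ^ 2) ^ s * jacobiP n 0 (2 * s) (c ^ 2 - σ ^ 2) : ℝ) : ℂ) = D := by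
    rw [hD]
    unfold jacobiP
    have ht1 : ((c ^ 2 - σ ^ 2 : ℝ) - 1) / 2 = -σ ^ 2 := by linarith
    have ht2 : ((c ^ 2 - σ ^ 2 : ℝ) + 1) / 2 = c ^ 2 := by linarith
    rw [ht1, ht2]
    push_cast
    rw [mul_sum, ← Finset.sum_range_reflect]
    refine sum_congr rfl fun j hj => ?_
    simp only [mem_range] at hj
    have hj' : j ≤ n := by omega
    simp only [Nat.add_sub_cancel, Nat.add_zero]
    simp only [hA, hB]
    rw [Nat.sub_sub_self hj', show n + 2 * s - (n - j) = j + 2 * s from by omega]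
    rw [show (-(σ:ℂ) ^ 2) = (-σ) * σ from by ring, mul_pow]
    ring
  calc |(c ^ 2) ^ s * jacobiP n 0 (2 * s) (c ^ 2 - σ ^ 2)|
      = ‖(((c ^ 2) ^ s * jacobiP n 0 (2 * s) (c ^ 2 - σ ^ 2) : ℝ) : ℂ)‖ := by
        rw [Complex.norm_real, Real.norm_eq_abs]
    _ = ‖D‖ := by rw [hTD]
    _ ≤ 2 ^ s := hDbound


/-- For every nonnegative integer `s` there is a constant `C > 0` such that for all
`l ≥ max s 1` and all `θ ∈ [0,π]`, the diagonal Wigner d-matrix element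
`d_{s,s}^l(θ) = ((1+cos θ)/2)^s · P_{l−s}^{(0,2s)}(cos θ)` is bounded by `C · l^{2s}`. -/
theorem wigner_d_diag_uniform_bound (s : ℕ) :
    ∃ C : ℝ, 0 < C ∧ ∀ l : ℕ, max s 1 ≤ l → ∀ θ ∈ Set.Icc (0 : ℝ) Real.pi,
      ((1 + Real.cos θ) / 2) ^ s * |jacobiP (l - s) 0 (2 * s) (Real.cos θ)|
        ≤ C * (l : ℝ) ^ (2 * s) := by
  refine ⟨2 ^ s, by positivity, ?_⟩
  intro l hl θ _
  set c : ℝ := Real.cos (θ / 2) with hc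
  set σ : ℝ := Real.sin (θ / 2) with hσ
  have h1 : c ^ 2 + σ ^ 2 = 1 := Real.cos_sq_add_sin_sq _
  have hcos : Real.cos θ = c ^ 2 - σ ^ 2 := by
    have h2 := Real.cos_sq (θ / 2)
    rw [show 2 * (θ / 2) = θ by ring] at h2
    rw [hc, hσ] at *
    linarith
  have hhalf : (1 + Real.cos θ) / 2 = c ^ 2 := by rw [hcos]; linarith
  rw [hhalf, hcos]
  have key := jacobi_key (l - s) s c σ h1
  have hpos : (0 : ℝ) ≤ (c ^ 2) ^ s := by positivity
  have habs : (c ^ 2) ^ s * |jacobiP (l - s) 0 (2 * s) (c ^ 2 - σ ^ 2)|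
      = |(c ^ 2) ^ s * jacobiP (l - s) 0 (2 * s) (c ^ 2 - σ ^ 2)| := by
    rw [abs_mul, abs_of_nonneg hpos]
  rw [habs]
  have hl1 : (1 : ℝ) ≤ (l : ℝ) ^ (2 * s) := by
    apply one_le_pow₀
    have : 1 ≤ l := le_trans (le_max_right s 1) hl
    exact_mod_cast this
  calc |(c ^ 2) ^ s * jacobiP (l - s) 0 (2 * s) (c ^ 2 - σ ^ 2)| ≤ 2 ^ s := key
    _ = 2 ^ s * 1 := by ring
    _ ≤ 2 ^ s * (l : ℝ) ^ (2 * s) := by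
        apply mul_le_mul_of_nonneg_left hl1 (by positivity)
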